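/- Let M be a cyclic R-module and N a proper submodule. Then N is a z°-submodule of M (i.e. 𝔓_x ⊆ N for every x ∈ N, where 𝔓_x is the intersection of all minimal prime submodules containing x) if and only if N is a quasi z°-submodule of M (i.e. 𝔓_{aM} ⊆ N for every a ∈ (N :_R M)). -/

import Mathlib

variable {R : Type*} [CommRing R] {M : Type*} [AddCommGroup M] [Module R M]

/-- `M` is a multiplication module: every submodule is `IM` for some ideal `I`. -/
def IsMultiplicationModule (R M : Type*) [CommRing R] [AddCommGroup M] [Module R M] : Prop :=
  ∀ N : Submodule R M, ∃ I : Ideal R, N = I • (⊤ : Submodule R M)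

/-- A prime submodule. -/
def Submodule.IsPrimeSubmodule (P : Submodule R M) : Prop :=
  P ≠ ⊤ ∧ ∀ (r : R) (m : M), r • m ∈ P → m ∈ P ∨ r ∈ P.colon ⊤

/-- `M` is reduced: the intersection of all prime submodules is zero. -/
def IsReducedModule (R M : Type*) [CommRing R] [AddCommGroup M] [Module R M] : Prop :=
  sInf {P : Submodule R M | P.IsPrimeSubmodule} = ⊥

/-- A minimal prime submodule of `M`. -/
def Submodule.IsMinimalPrime (P : Submodule R M) : Prop :=
  P.IsPrimeSubmodule ∧ ∀ Q : Submodule R M, Q.IsPrimeSubmodule → Q ≤ P → Q = P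

/-- `𝔓_K`: the intersection of all minimal prime submodules containing `K`
(equal to `M` if there are none). -/
def primeRad (K : Submodule R M) : Submodule R M :=
  sInf {P : Submodule R M | P.IsMinimalPrime ∧ K ≤ P}

/-- `V(K)`: the set of minimal prime submodules containing `K`. -/
def Vset (K : Submodule R M) : Set (Submodule R M) :=
  {P : Submodule R M | P.IsMinimalPrime ∧ K ≤ P}

/-- A quasi `z°`-submodule. -/
def IsQuasiZSubmodule (N : Submodule R M) : Prop :=
  N ≠ ⊤ ∧ ∀ a ∈ N.colon ⊤, primeRad (Ideal.span {a} • (⊤ : Submodule R M)) ≤ N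

/-- `𝔓_I` for an ideal: intersection of all minimal prime ideals of `R` containing `I`. -/
def idealPrimeRad (I : Ideal R) : Ideal R :=
  sInf {p : Ideal R | p ∈ minimalPrimes R ∧ I ≤ p}

/-- A `z°`-ideal of `R`. -/
def IsZIdeal (I : Ideal R) : Prop :=
  I ≠ ⊤ ∧ ∀ a ∈ I, idealPrimeRad (Ideal.span {a}) ≤ I

/-- `(0 :_M J)` for an ideal `J`. -/
def pointAnn (J : Ideal R) : Submodule R M where
  carrier := {m : M | ∀ j ∈ J, j • m = 0}
  zero_mem' := by intro j _; simp
  add_mem' := by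
    intro a b ha hb j hj
    rw [smul_add, ha j hj, hb j hj, add_zero]
  smul_mem' := by
    intro c m hm j hj
    rw [smul_comm, hm j hj, smul_zero]


/-- A `z°`-submodule. -/
def IsZSubmodule (N : Submodule R M) : Prop :=
  N ≠ ⊤ ∧ ∀ x ∈ N, sInf {P : Submodule R M | P.IsMinimalPrime ∧ x ∈ P} ≤ N

lemma key (g : M) (hg : Submodule.span R {g} = ⊤) (a : R) :
    Ideal.span {a} • (⊤ : Submodule R M) = Submodule.span R {a • g} := by
  rw [Submodule.ideal_span_singleton_smul, ← hg, Submodule.smul_span]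
  congr 1
  simp [Set.smul_set_singleton]

theorem stmt8 (hcyc : ∃ x : M, Submodule.span R {x} = ⊤)
    (N : Submodule R M) (hN : N ≠ ⊤) :
    IsZSubmodule N ↔ IsQuasiZSubmodule N := by
  obtain ⟨g, hg⟩ := hcyc
  constructor
  · rintro ⟨-, hz⟩
    refine ⟨hN, fun a ha => ?_⟩
    have hx : a • g ∈ N := by
      exact Submodule.mem_colon.mp ha g (Submodule.mem_top (R := R))
    have : primeRad (Ideal.span {a} • (⊤ : Submodule R M))
        = sInf {P : Submodule R M | P.IsMinimalPrime ∧ a • g ∈ P} := by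
      rw [primeRad, key g hg]
      congr 1
      ext P
      simp [Submodule.span_singleton_le_iff_mem]
    rw [this]
    exact hz _ hx
  · rintro ⟨-, hq⟩
    refine ⟨hN, fun x hx => ?_⟩
    have hxg : x ∈ Submodule.span R {g} := hg ▸ Submodule.mem_top
    obtain ⟨a, rfl⟩ := Submodule.mem_span_singleton.mp hxg
    have ha : a ∈ N.colon ⊤ := by
      rw [Submodule.mem_colon]
      intro m hm
      have hmg : m ∈ Submodule.span R {g} := hg ▸ Submodule.mem_top
      obtain ⟨r, rfl⟩ := Submodule.mem_span_singleton.mp hmg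
      have : a • r • g = r • (a • g) := by rw [smul_comm]
      rw [this]
      exact N.smul_mem r hx
    have := hq a ha
    rw [primeRad, key g hg] at this
    refine le_trans (le_of_eq ?_) this
    congr 1
    ext P
    simp [Submodule.span_singleton_le_iff_mem]
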